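/- The elliptic curve E : Y² + 7XY - 28Y = X³ + 7X - 35 over ℚ has a rational point (2, 1) of order 7. -/

import Mathlib

open WeierstrassCurve.Affine WeierstrassCurve.Affine.Point

private lemma some_eq_some {W : WeierstrassCurve.Affine ℚ} {x₁ y₁ x₂ y₂ : ℚ}
    (hx : x₁ = x₂) (hy : y₁ = y₂) (h₁ : W.Nonsingular x₁ y₁) (h₂ : W.Nonsingular x₂ y₂) :
    Point.some _ _ h₁ = Point.some _ _ h₂ := by subst hx; subst hy; rfl

/-- The elliptic curve `Y² + 7XY - 28Y = X³ + 7X - 35` over `ℚ` (so `a₁ = 7`, `a₂ = 0`,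
`a₃ = -28`, `a₄ = 7`, `a₆ = -35`) has the rational point `(2, 1)`, which has order 7. -/
theorem stmt_10 (W : WeierstrassCurve ℚ) (hW : W = ⟨7, 0, -28, 7, -35⟩) :
    ∃ h : W.toAffine.Nonsingular 2 1,
      addOrderOf (WeierstrassCurve.Affine.Point.some _ _ h) = 7 := by
  subst hW
  set W' : WeierstrassCurve.Affine ℚ := ⟨7, 0, -28, 7, -35⟩ with hW'
  have h1 : W'.Nonsingular 2 1 := by
    rw [nonsingular_iff, equation_iff']; norm_num [hW']
  have h2 : W'.Nonsingular (-10) 85 := by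
    rw [nonsingular_iff, equation_iff']; norm_num [hW']
  have h3 : W'.Nonsingular 8 13 := by
    rw [nonsingular_iff, equation_iff']; norm_num [hW']
  have h4 : W'.Nonsingular 8 (-41) := by
    rw [nonsingular_iff, equation_iff']; norm_num [hW']
  have hy1 : (1 : ℚ) ≠ W'.negY 2 1 := by norm_num [negY, hW']
  have e2 : some _ _ h1 + some _ _ h1 = some _ _ h2 := by
    rw [add_self_of_Y_ne hy1]
    refine some_eq_some ?_ ?_ _ _ <;>
      rw [slope_of_Y_ne rfl hy1] <;> norm_num [negY, addX, addY, negAddY, hW']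
  have e3 : some _ _ h2 + some _ _ h1 = some _ _ h3 := by
    have hx : (-10 : ℚ) ≠ 2 := by norm_num
    rw [add_of_X_ne hx]
    refine some_eq_some ?_ ?_ _ _ <;>
      rw [slope_of_X_ne hx] <;> norm_num [negY, addX, addY, negAddY, hW']
  have e4 : some _ _ h3 + some _ _ h1 = some _ _ h4 := by
    have hx : (8 : ℚ) ≠ 2 := by norm_num
    rw [add_of_X_ne hx]
    refine some_eq_some ?_ ?_ _ _ <;>
      rw [slope_of_X_ne hx] <;> norm_num [negY, addX, addY, negAddY, hW']
  have e7 : (7 : ℕ) • some _ _ h1 = 0 := by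
    have : (7 : ℕ) • some _ _ h1 =
        some _ _ h1 + some _ _ h1 + some _ _ h1 + some _ _ h1 + (some _ _ h1 + some _ _ h1 + some _ _ h1) := by
      abel
    rw [this, e2, e3, e4, add_of_Y_eq rfl (by norm_num [negY, hW'])]
  refine ⟨h1, ?_⟩
  haveI : Fact (Nat.Prime 7) := ⟨by norm_num⟩
  exact addOrderOf_eq_prime e7 (some_ne_zero h1)
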